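/- arXiv:1303.0354 — 6 statements merged into one kernel-verified Lean document; each statement's English description precedes it below -/
import Mathlib

section
/- Let d ≥ 1 be an integer, let f : ℝ^d → ℝ be twice continuously differentiable, let μ ∈ ℝ, and suppose Δf(x) − (1/2)⟨x, ∇f(x)⟩ = μ·f(x) for all x ∈ ℝ^d. Then for every natural number k, the function F : ℝ^d × ℝ → ℝ defined by F(x, y) = f(x)·H_k(y/2) satisfies Δ_{ℝ^{d+1}}F(x,y) − (1/2)⟨(x,y), ∇F(x,y)⟩ = (μ − k/2)·F(x,y) for all (x, y) ∈ ℝ^d × ℝ, where the Laplacian and gradient on the left are those of ℝ^{d+1} = ℝ^d × ℝ. -/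
/-- The `k`-th physicists' Hermite polynomial (as a function),
`H_k(z) = (−1)^k e^{z²} (d/dz)^k e^{−z²}`. -/
noncomputable def physHermite (k : ℕ) (z : ℝ) : ℝ :=
  (-1 : ℝ)^k * Real.exp (z^2) * iteratedDeriv k (fun t : ℝ => Real.exp (-t^2)) z

section PhysHermiteAux
open Polynomial

lemma derivative_hermite_succ (n : ℕ) :
    derivative (hermite (n+1)) = ((n : ℤ[X]) + 1) * hermite n := by
  induction n with
  | zero => simp [hermite_one, hermite_zero]
  | succ n ih =>
    rw [hermite_succ (n+1), derivative_sub, derivative_mul, derivative_X, one_mul, ih,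
      derivative_mul]
    have hd : derivative ((n : ℤ[X]) + 1) = 0 := by simp
    rw [hd, zero_mul, zero_add, hermite_succ n]
    push_cast
    ring

lemma aeval_derivative_hermite_succ (n : ℕ) (w : ℝ) :
    aeval w (derivative (hermite (n+1))) = ((n : ℝ) + 1) * aeval w (hermite n) := by
  rw [derivative_hermite_succ, map_mul]
  simp

lemma physHermite_eq (k : ℕ) (z : ℝ) :
    physHermite k z = Real.sqrt 2 ^ k * aeval (Real.sqrt 2 * z) (hermite k) := by
  have hs : Real.sqrt 2 ^ 2 = 2 := Real.sq_sqrt (by norm_num)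
  have hfun : (fun t : ℝ => Real.exp (-t ^ 2))
      = fun t => (fun y : ℝ => Real.exp (-(y ^ 2 / 2))) (Real.sqrt 2 * t) := by
    funext t
    show Real.exp (-t ^ 2) = Real.exp (-((Real.sqrt 2 * t) ^ 2 / 2))
    rw [mul_pow, hs]
    ring_nf
  have hg : ContDiff ℝ k fun y : ℝ => Real.exp (-(y ^ 2 / 2)) := by
    have : ContDiff ℝ ⊤ fun y : ℝ => Real.exp (-(y ^ 2 / 2)) :=
      Real.contDiff_exp.comp (((contDiff_id.pow 2).div_const 2).neg)
    exact this.of_le le_top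
  unfold physHermite
  rw [hfun, iteratedDeriv_comp_const_mul hg]
  simp only [iteratedDeriv_eq_iterate, Polynomial.deriv_gaussian_eq_hermite_mul_gaussian]
  have hz : -((Real.sqrt 2 * z) ^ 2 / 2) = -z ^ 2 := by rw [mul_pow, hs]; ring
  rw [hz]
  have hneg : ((-1 : ℝ)) ^ k * ((-1 : ℝ)) ^ k = 1 := by
    rw [← pow_add]
    exact Even.neg_one_pow ⟨k, rfl⟩
  have hexp : Real.exp (z ^ 2) * Real.exp (-z ^ 2) = 1 := by
    rw [← Real.exp_add]; simp
  calc (-1 : ℝ) ^ k * Real.exp (z ^ 2) *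
        (Real.sqrt 2 ^ k * ((-1) ^ k * aeval (Real.sqrt 2 * z) (hermite k) * Real.exp (-z ^ 2)))
      = ((-1 : ℝ) ^ k * (-1) ^ k) * (Real.exp (z ^ 2) * Real.exp (-z ^ 2)) *
        (Real.sqrt 2 ^ k * aeval (Real.sqrt 2 * z) (hermite k)) := by ring
    _ = Real.sqrt 2 ^ k * aeval (Real.sqrt 2 * z) (hermite k) := by rw [hneg, hexp]; ring

lemma physHermite_zero : physHermite 0 = fun _ : ℝ => 1 := by
  funext z
  rw [physHermite_eq]
  simp [hermite_zero]

lemma hasDerivAt_physHermite (k : ℕ) (z : ℝ) :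
    HasDerivAt (physHermite k) (2 * (k : ℝ) * physHermite (k - 1) z) z := by
  cases k with
  | zero =>
    rw [physHermite_zero]
    simpa using hasDerivAt_const z (1 : ℝ)
  | succ n =>
    have hs : Real.sqrt 2 ^ 2 = 2 := Real.sq_sqrt (by norm_num)
    have hrepr : physHermite (n+1)
        = fun z => Real.sqrt 2 ^ (n+1) * aeval (Real.sqrt 2 * z) (hermite (n+1)) :=
      funext fun z => physHermite_eq _ _
    rw [hrepr]
    have hinner : HasDerivAt (fun w : ℝ => Real.sqrt 2 * w) (Real.sqrt 2) z := by
      simpa using (hasDerivAt_id z).const_mul (Real.sqrt 2)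
    have h1 : HasDerivAt (fun w : ℝ => aeval (Real.sqrt 2 * w) (hermite (n+1)))
        (aeval (Real.sqrt 2 * z) (derivative (hermite (n+1))) * Real.sqrt 2) z :=
      ((hermite (n+1)).hasDerivAt_aeval (Real.sqrt 2 * z)).comp z hinner
    have h3 := h1.const_mul (Real.sqrt 2 ^ (n+1))
    refine h3.congr_deriv ?_
    symm
    rw [aeval_derivative_hermite_succ]
    simp only [Nat.add_sub_cancel]
    rw [physHermite_eq]
    push_cast
    rw [pow_succ]
    linear_combination (-((n : ℝ) + 1) * Real.sqrt 2 ^ n *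
      aeval (Real.sqrt 2 * z) (hermite n)) * hs

lemma physHermite_succ' (k : ℕ) (z : ℝ) :
    physHermite (k+1) z = 2 * z * physHermite k z - 2 * (k : ℝ) * physHermite (k - 1) z := by
  have hs : Real.sqrt 2 ^ 2 = 2 := Real.sq_sqrt (by norm_num)
  cases k with
  | zero =>
    show physHermite 1 z = _
    rw [physHermite_eq, physHermite_zero]
    simp only [hermite_one, aeval_X, Nat.cast_zero, pow_one, Nat.zero_sub]
    linear_combination z * hs
  | succ m =>
    simp only [Nat.add_sub_cancel]
    rw [physHermite_eq, physHermite_eq, physHermite_eq, hermite_succ (m+1), map_sub, map_mul,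
      aeval_X, aeval_derivative_hermite_succ]
    push_cast
    rw [pow_succ (Real.sqrt 2) (m+1), pow_succ (Real.sqrt 2) m]
    linear_combination (Real.sqrt 2 ^ m * Real.sqrt 2 * z * aeval (Real.sqrt 2 * z) (hermite (m+1))
      - ((m : ℝ) + 1) * Real.sqrt 2 ^ m * aeval (Real.sqrt 2 * z) (hermite m)) * hs


lemma physHermite_key (k : ℕ) (z : ℝ) :
    (k : ℝ) * (((k - 1 : ℕ) : ℝ) * physHermite (k - 1 - 1) z - z * physHermite (k - 1) z)
      = -((k : ℝ)/2) * physHermite k z := by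
  cases k with
  | zero => simp
  | succ m =>
    have h := physHermite_succ' m z
    simp only [Nat.add_sub_cancel]
    push_cast
    linear_combination (((m : ℝ) + 1)/2) * h

lemma iteratedDeriv_two (F : ℝ → ℝ) : iteratedDeriv 2 F = deriv (deriv F) := by
  rw [show (2 : ℕ) = 1 + 1 from rfl, iteratedDeriv_succ, iteratedDeriv_one]

lemma iteratedDeriv_two_mul_const {g : ℝ → ℝ} (hg : ContDiff ℝ 2 g) (c z : ℝ) :
    iteratedDeriv 2 (fun t => g t * c) z = iteratedDeriv 2 g z * c := by
  have hd : Differentiable ℝ g := hg.differentiable two_ne_zero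
  have hd1 : Differentiable ℝ (deriv g) := by
    have := hg.differentiable_iteratedDeriv 1 (by norm_num)
    rwa [iteratedDeriv_one] at this
  have h1 : deriv (fun t => g t * c) = fun t => deriv g t * c := by
    funext t; exact deriv_mul_const (hd t) c
  rw [iteratedDeriv_two, iteratedDeriv_two, h1]
  exact deriv_mul_const (hd1 z) c

end PhysHermiteAux

/-- If `f : ℝ^d → ℝ` is `C²` and satisfies `Δf − (1/2)⟨x,∇f⟩ = μ f`, then
`F(x,y) = f(x)·H_k(y/2)` satisfies `Δ_{ℝ^{d+1}}F − (1/2)⟨(x,y),∇F⟩ = (μ − k/2)·F`. -/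
theorem stmt2 (d : ℕ) (hd : 1 ≤ d) (f : (Fin d → ℝ) → ℝ) (hf : ContDiff ℝ 2 f) (μ : ℝ)
    (heq : ∀ x : Fin d → ℝ,
      (∑ i, iteratedDeriv 2 (fun t : ℝ => f (Function.update x i t)) (x i))
        - (1/2) * ∑ i, x i * deriv (fun t : ℝ => f (Function.update x i t)) (x i)
      = μ * f x)
    (k : ℕ) :
    ∀ (x : Fin d → ℝ) (y : ℝ),
      ((∑ i, iteratedDeriv 2
            (fun t : ℝ => f (Function.update x i t) * physHermite k (y/2)) (x i))
        + iteratedDeriv 2 (fun t : ℝ => f x * physHermite k (t/2)) y)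
      - (1/2) * ((∑ i, x i * deriv
            (fun t : ℝ => f (Function.update x i t) * physHermite k (y/2)) (x i))
        + y * deriv (fun t : ℝ => f x * physHermite k (t/2)) y)
      = (μ - (k : ℝ)/2) * (f x * physHermite k (y/2)) := by
  intro x y
  have hgi : ∀ i, ContDiff ℝ 2 (fun t : ℝ => f (Function.update x i t)) := fun i =>
    hf.comp (contDiff_update 2 x i)
  -- x-part second derivatives
  have e1 : (∑ i, iteratedDeriv 2
        (fun t : ℝ => f (Function.update x i t) * physHermite k (y/2)) (x i))
      = (∑ i, iteratedDeriv 2 (fun t : ℝ => f (Function.update x i t)) (x i))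
        * physHermite k (y/2) := by
    rw [Finset.sum_mul]
    exact Finset.sum_congr rfl fun i _ => iteratedDeriv_two_mul_const (hgi i) _ _
  -- x-part first derivatives
  have e2 : (∑ i, x i * deriv
        (fun t : ℝ => f (Function.update x i t) * physHermite k (y/2)) (x i))
      = (∑ i, x i * deriv (fun t : ℝ => f (Function.update x i t)) (x i))
        * physHermite k (y/2) := by
    rw [Finset.sum_mul]
    refine Finset.sum_congr rfl fun i _ => ?_
    rw [deriv_mul_const (((hgi i).differentiable two_ne_zero) (x i))]
    ring
  -- y-part first derivative (as a function)
  have hH : ∀ (j : ℕ) (t : ℝ),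
      HasDerivAt (fun s : ℝ => physHermite j (s/2))
        (2 * (j : ℝ) * physHermite (j - 1) (t/2) * (1/2)) t := by
    intro j t
    exact (hasDerivAt_physHermite j (t/2)).comp t ((hasDerivAt_id t).div_const 2)
  have hderiv : deriv (fun t : ℝ => f x * physHermite k (t/2))
      = fun t : ℝ => f x * (k : ℝ) * physHermite (k - 1) (t/2) := by
    funext t
    rw [((hH k t).const_mul (f x)).deriv]
    ring
  -- y-part second derivative
  have e3 : iteratedDeriv 2 (fun t : ℝ => f x * physHermite k (t/2)) y
      = f x * (k : ℝ) * (2 * ((k - 1 : ℕ) : ℝ) * physHermite (k - 1 - 1) (y/2) * (1/2)) := by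
    rw [iteratedDeriv_two, hderiv]
    exact (((hH (k-1) y).const_mul (f x * (k : ℝ)))).deriv
  rw [e1, e2, e3, hderiv]
  have h1 := heq x
  have h2 := physHermite_key k (y/2)
  linear_combination (physHermite k (y/2)) * h1 + (f x) * h2
end

section
/- Let a < √2 be a real number. There is no twice differentiable function g : ℝ → ℝ such that g''(x) − (x/2)·g'(x) + g(x) = 0 for all x ∈ (a, ∞) and g(x) > 0 for all x ∈ (a, ∞). -/
/-- Key growth inequality: for `x ≥ 16`, `(x²-2)² ≤ exp (x²/4)`. -/
lemma exp_growth (x : ℝ) (hx : (16:ℝ) ≤ x) : (x^2 - 2)^2 ≤ Real.exp (x^2/4) := by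
  have h1 : x^2/16 + 1 ≤ Real.exp (x^2/16) := Real.add_one_le_exp _
  have h2 : Real.exp (x^2/4) = (Real.exp (x^2/16))^4 := by
    rw [← Real.exp_nat_mul]
    norm_num
    ring_nf
  have hx2 : (256:ℝ) ≤ x^2 := by nlinarith
  have he : x^2/16 ≤ Real.exp (x^2/16) := by linarith
  have hnn : (0:ℝ) ≤ x^2/16 := by positivity
  have h3 : (x^2/16)^4 ≤ (Real.exp (x^2/16))^4 := pow_le_pow_left₀ hnn he 4
  rw [h2]
  have hA : (65536:ℝ) ≤ (x^2)^2 := by nlinarith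
  calc (x^2 - 2)^2 ≤ (x^2)^2 := by nlinarith
    _ ≤ (x^2)^4/65536 := by nlinarith [mul_nonneg (sq_nonneg (x^2)) (sub_nonneg.mpr hA)]
    _ = (x^2/16)^4 := by ring
    _ ≤ (Real.exp (x^2/16))^4 := h3

/-- For `a < √2` there is no twice differentiable `g : ℝ → ℝ` with
`g'' − (x/2)g' + g = 0` and `g > 0` on `(a, ∞)`. -/
theorem stmt5 (a : ℝ) (ha : a < Real.sqrt 2) :
    ¬ ∃ g : ℝ → ℝ, Differentiable ℝ g ∧ Differentiable ℝ (deriv g) ∧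
      (∀ x ∈ Set.Ioi a, deriv (deriv g) x - (x/2) * deriv g x + g x = 0) ∧
      (∀ x ∈ Set.Ioi a, 0 < g x) := by
  rintro ⟨g, hg, hg', hode, hpos⟩
  set s2 := Real.sqrt 2 with hs2
  have hs2sq : s2^2 = 2 := Real.sq_sqrt (by norm_num)
  have hs2pos : 0 < s2 := Real.sqrt_pos.mpr (by norm_num)
  have hs2lt : s2 < 2 := by nlinarith
  -- the Wronskian of g with the explicit solution x² - 2
  set W : ℝ → ℝ := fun x => deriv g x * (x^2 - 2) - g x * (2*x) with hWdef
  have hWderiv : ∀ x : ℝ, HasDerivAt W (deriv (deriv g) x * (x^2-2) - 2 * g x) x := by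
    intro x
    have hq : HasDerivAt (fun y : ℝ => y^2 - 2) (2*x) x := by
      simpa using (hasDerivAt_pow 2 x).sub_const 2
    have h1 : HasDerivAt (fun y => deriv g y * (y^2-2))
        (deriv (deriv g) x * (x^2-2) + deriv g x * (2*x)) x :=
      ((hg' x).hasDerivAt).mul hq
    have hl : HasDerivAt (fun y : ℝ => 2*y) 2 x := by
      simpa using (hasDerivAt_id x).const_mul 2
    have h2 : HasDerivAt (fun y => g y * (2*y))
        (deriv g x * (2*x) + g x * 2) x := ((hg x).hasDerivAt).mul hl
    have := h1.sub h2
    refine this.congr_deriv ?_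
    ring
  -- the rescaled Wronskian is constant on (a, ∞)
  set V : ℝ → ℝ := fun x => W x * Real.exp (-(x^2)/4) with hVdef
  have hVderiv : ∀ x ∈ Set.Ioi a, HasDerivAt V 0 x := by
    intro x hx
    have he : HasDerivAt (fun y : ℝ => Real.exp (-(y^2)/4))
        ((-(2*x)/4) * Real.exp (-(x^2)/4)) x := by
      have hinner : HasDerivAt (fun y : ℝ => -(y^2)/4) (-(2*x)/4) x := by
        have := ((hasDerivAt_pow 2 x).neg).div_const 4
        simpa using this
      refine ((Real.hasDerivAt_exp (-(x^2)/4)).comp x hinner).congr_deriv ?_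
      ring
    have hV := (hWderiv x).mul he
    have hodex := hode x hx
    have hdd : deriv (deriv g) x = (x/2) * deriv g x - g x := by linarith
    refine hV.congr_deriv ?_
    rw [hdd]
    ring
  have hconst : ∀ x : ℝ, s2 ≤ x → V x = V s2 := by
    intro x hx
    have hdiff : DifferentiableOn ℝ V (interior (Set.Ioi a)) := by
      intro y hy
      rw [interior_Ioi] at hy
      exact ((hVderiv y hy).differentiableAt).differentiableWithinAt
    have hcont : ContinuousOn V (Set.Ioi a) := by
      intro y hy
      exact ((hVderiv y hy).differentiableAt).continuousAt.continuousWithinAt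
    have hd0 : ∀ y ∈ interior (Set.Ioi a), 0 ≤ deriv V y := by
      intro y hy; rw [interior_Ioi] at hy; rw [(hVderiv y hy).deriv]
    have hd0' : ∀ y ∈ interior (Set.Ioi a), deriv V y ≤ 0 := by
      intro y hy; rw [interior_Ioi] at hy; rw [(hVderiv y hy).deriv]
    have hmono := monotoneOn_of_deriv_nonneg (convex_Ioi a) hcont hdiff hd0
    have hanti := antitoneOn_of_deriv_nonpos (convex_Ioi a) hcont hdiff hd0'
    have hs2mem : s2 ∈ Set.Ioi a := ha
    have hxmem : x ∈ Set.Ioi a := lt_of_lt_of_le ha hx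
    exact le_antisymm (hanti hs2mem hxmem hx) (hmono hs2mem hxmem hx)
  -- the constant is negative
  set c : ℝ := V s2 with hcdef
  have hWs2 : W s2 = - (2 * s2 * g s2) := by
    simp only [hWdef, hs2sq]
    ring
  have hgs2 : 0 < g s2 := hpos s2 ha
  have hcneg : c < 0 := by
    have hW : W s2 < 0 := by
      rw [hWs2]
      have : 0 < 2 * s2 * g s2 := by positivity
      linarith
    have : 0 < Real.exp (-(s2^2)/4) := Real.exp_pos _
    simp only [hcdef, hVdef]
    exact mul_neg_of_neg_of_pos hW this
  -- hence `W x = c · exp (x²/4)` for `x ≥ √2`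
  have hWval : ∀ x : ℝ, s2 ≤ x → W x = c * Real.exp (x^2/4) := by
    intro x hx
    have h := hconst x hx
    have hprod : Real.exp (-(x^2)/4) * Real.exp (x^2/4) = 1 := by
      rw [← Real.exp_add]; ring_nf; exact Real.exp_zero
    calc W x = W x * (Real.exp (-(x^2)/4) * Real.exp (x^2/4)) := by rw [hprod]; ring
      _ = V x * Real.exp (x^2/4) := by simp only [hVdef]; ring
      _ = c * Real.exp (x^2/4) := by rw [h]
  -- the quotient u = g / (x² - 2) on (√2, ∞)
  set u : ℝ → ℝ := fun x => g x / (x^2 - 2) with hudef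
  have hupos : ∀ x : ℝ, s2 < x → 0 < u x := by
    intro x hx
    have hx2 : 0 < x^2 - 2 := by nlinarith
    have hgx : 0 < g x := hpos x (ha.trans hx)
    positivity
  have huderiv : ∀ x : ℝ, s2 < x → HasDerivAt u (W x / (x^2-2)^2) x := by
    intro x hx
    have hx2 : x^2 - 2 ≠ 0 := by nlinarith
    have hq : HasDerivAt (fun y : ℝ => y^2 - 2) (2*x) x := by
      simpa using (hasDerivAt_pow 2 x).sub_const 2
    have := ((hg x).hasDerivAt).div hq hx2
    exact this
  -- φ x = u x - c x is antitone on [16, ∞)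
  set φ : ℝ → ℝ := fun x => u x - c * x with hφdef
  have hs2lt16 : s2 < 16 := by linarith
  have hφderiv : ∀ x : ℝ, s2 < x → HasDerivAt φ (W x / (x^2-2)^2 - c) x := by
    intro x hx
    have hl : HasDerivAt (fun y : ℝ => c * y) c x := by
      simpa using (hasDerivAt_id x).const_mul c
    exact (huderiv x hx).sub hl
  have hφanti : AntitoneOn φ (Set.Ici (16:ℝ)) := by
    apply antitoneOn_of_deriv_nonpos (convex_Ici 16)
    · intro y hy
      have : s2 < y := lt_of_lt_of_le hs2lt16 hy
      exact ((hφderiv y this).differentiableAt).continuousAt.continuousWithinAt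
    · intro y hy
      rw [interior_Ici] at hy
      have : s2 < y := hs2lt16.trans hy
      exact ((hφderiv y this).differentiableAt).differentiableWithinAt
    · intro y hy
      rw [interior_Ici] at hy
      have hys2 : s2 < y := hs2lt16.trans hy
      rw [(hφderiv y hys2).deriv]
      have hW := hWval y hys2.le
      have hy2 : (0:ℝ) < (y^2 - 2)^2 := by
        have : 0 < y^2 - 2 := by nlinarith
        positivity
      have hexp : (y^2 - 2)^2 ≤ Real.exp (y^2/4) := exp_growth y hy.le
      have h1 : Real.exp (y^2/4) / (y^2-2)^2 ≥ 1 := (one_le_div hy2).mpr hexp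
      have : W y / (y^2-2)^2 = c * (Real.exp (y^2/4) / (y^2-2)^2) := by
        rw [hW]; ring
      rw [this]
      nlinarith
  -- conclude: u becomes negative, contradiction
  have hu16 : 0 < u 16 := hupos 16 hs2lt16
  set x0 : ℝ := 16 + (u 16 + 1) / (-c) with hx0def
  have hcneg' : 0 < -c := neg_pos.mpr hcneg
  have hx0gt : 16 < x0 := by
    have h : 0 < (u 16 + 1) / (-c) := div_pos (by linarith) hcneg'
    rw [hx0def]
    linarith
  have hle := hφanti (Set.self_mem_Ici) (Set.mem_Ici.mpr hx0gt.le) hx0gt.le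
  have hkey : c * (x0 - 16) = -(u 16 + 1) := by
    have hc0 : c ≠ 0 := ne_of_lt hcneg
    rw [hx0def]
    field_simp
    ring
  have hux0 : 0 < u x0 := hupos x0 (hs2lt16.trans hx0gt)
  simp only [hφdef] at hle
  nlinarith
end

section
/- C = √2 is the unique positive real number with the following property: each of the three intervals (−∞, −C), (−C, C), and (C, ∞) admits a twice differentiable function g, defined and strictly positive on that interval, satisfying g''(x) − (x/2)·g'(x) + g(x) = 0 on that interval. -/
/-- The set `s` admits a strictly positive, twice differentiable solution of
`g'' − (x/2)g' + g = 0` on `s`. -/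
def HasPosJacobi (s : Set ℝ) : Prop :=
  ∃ g : ℝ → ℝ, ∀ x ∈ s,
    DifferentiableAt ℝ g x ∧ DifferentiableAt ℝ (deriv g) x ∧
    deriv (deriv g) x - (x/2) * deriv g x + g x = 0 ∧ 0 < g x

open Real Set Filter

noncomputable def Wr (g : ℝ → ℝ) (x : ℝ) : ℝ :=
  Real.exp (-(x^2)/4) * (2*x * g x - (x^2-2) * deriv g x)

lemma hasDerivAt_Wr {g : ℝ → ℝ} {x : ℝ} (h1 : DifferentiableAt ℝ g x)
    (h2 : DifferentiableAt ℝ (deriv g) x)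
    (hode : deriv (deriv g) x - (x/2) * deriv g x + g x = 0) :
    HasDerivAt (Wr g) 0 x := by
  have hg : HasDerivAt g (deriv g x) x := h1.hasDerivAt
  have hg1 : HasDerivAt (deriv g) (deriv (deriv g) x) x := h2.hasDerivAt
  have hq : HasDerivAt (fun y : ℝ => -(y^2)/4) (-(x/2)) x := by
    have := ((hasDerivAt_pow 2 x).neg.div_const 4)
    refine this.congr_deriv ?_
    simp; ring
  have hE : HasDerivAt (fun y : ℝ => Real.exp (-(y^2)/4))
      (Real.exp (-(x^2)/4) * (-(x/2))) x := hq.exp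
  have hF1 : HasDerivAt (fun y : ℝ => 2*y * g y) (2 * g x + 2*x * deriv g x) x := by
    have := ((hasDerivAt_id x).const_mul 2).mul hg
    simp only [id] at this
    refine this.congr_deriv ?_
    ring
  have hF2 : HasDerivAt (fun y : ℝ => (y^2-2) * deriv g y)
      (2*x * deriv g x + (x^2-2) * deriv (deriv g) x) x := by
    have := ((hasDerivAt_pow 2 x).sub_const 2).mul hg1
    refine this.congr_deriv ?_
    ring
  have hF : HasDerivAt (fun y : ℝ => 2*y * g y - (y^2-2) * deriv g y)
      (2 * g x - (x^2-2) * deriv (deriv g) x) x := by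
    have := hF1.sub hF2
    refine this.congr_deriv ?_
    ring
  have := hE.mul hF
  refine this.congr_deriv (Eq.symm ?_)
  linear_combination (Real.exp (-(x^2)/4) * (x^2-2)) * hode

lemma Wr_const {s : Set ℝ} (hs : Convex ℝ s) {g : ℝ → ℝ}
    (hg : ∀ x ∈ s, DifferentiableAt ℝ g x ∧ DifferentiableAt ℝ (deriv g) x ∧
      deriv (deriv g) x - (x/2) * deriv g x + g x = 0) :
    ∀ x ∈ s, ∀ y ∈ s, Wr g x = Wr g y := by
  have key : ∀ x ∈ s, ∀ y ∈ s, x ≤ y → Wr g y = Wr g x := by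
    intro x hx y hy hxy
    have hsub : Icc x y ⊆ s := hs.ordConnected.out hx hy
    have hcont : ContinuousOn (Wr g) (Icc x y) := by
      intro t ht
      have h := hg t (hsub ht)
      exact ((hasDerivAt_Wr h.1 h.2.1 h.2.2).continuousAt).continuousWithinAt
    have := constant_of_has_deriv_right_zero hcont (fun t ht => by
      have h := hg t (hsub (Ico_subset_Icc_self ht))
      exact (hasDerivAt_Wr h.1 h.2.1 h.2.2).hasDerivWithinAt)
    exact this y (right_mem_Icc.2 hxy)
  intro x hx y hy
  rcases le_total x y with h | h
  · exact (key x hx y hy h).symm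
  · exact key y hy x hx h

lemma quad_hasDeriv (x : ℝ) : HasDerivAt (fun y : ℝ => y^2 - 2) (2*x) x := by
  simpa using ((hasDerivAt_pow 2 x).sub_const 2)

lemma deriv_quad : deriv (fun y : ℝ => y^2 - 2) = fun x => 2*x := by
  funext x; exact (quad_hasDeriv x).deriv

lemma quad2_hasDeriv (x : ℝ) : HasDerivAt (fun y : ℝ => 2 - y^2) (-(2*x)) x := by
  simpa using ((hasDerivAt_pow 2 x).const_sub 2)

lemma deriv_quad2 : deriv (fun y : ℝ => 2 - y^2) = fun x => -(2*x) := by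
  funext x; exact (quad2_hasDeriv x).deriv

lemma quad_jacobi (x : ℝ) :
    DifferentiableAt ℝ (fun y : ℝ => y^2 - 2) x ∧
    DifferentiableAt ℝ (deriv (fun y : ℝ => y^2 - 2)) x ∧
    deriv (deriv (fun y : ℝ => y^2 - 2)) x
      - (x/2) * deriv (fun y : ℝ => y^2 - 2) x + (x^2 - 2) = 0 := by
  rw [deriv_quad]
  have h2 : deriv (fun x : ℝ => 2*x) x = 2 := by
    simpa using ((hasDerivAt_id x).const_mul 2).deriv
  refine ⟨(quad_hasDeriv x).differentiableAt, ?_, ?_⟩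
  · exact ((hasDerivAt_id x).const_mul 2).differentiableAt
  · rw [h2]; ring

lemma quad2_jacobi (x : ℝ) :
    DifferentiableAt ℝ (fun y : ℝ => 2 - y^2) x ∧
    DifferentiableAt ℝ (deriv (fun y : ℝ => 2 - y^2)) x ∧
    deriv (deriv (fun y : ℝ => 2 - y^2)) x
      - (x/2) * deriv (fun y : ℝ => 2 - y^2) x + (2 - x^2) = 0 := by
  rw [deriv_quad2]
  have h2 : deriv (fun x : ℝ => -(2*x)) x = -2 := by
    simpa using (((hasDerivAt_id x).const_mul 2).neg).deriv
  refine ⟨(quad2_hasDeriv x).differentiableAt, ?_, ?_⟩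
  · exact (((hasDerivAt_id x).const_mul 2).neg).differentiableAt
  · rw [h2]; ring



set_option maxHeartbeats 1600000 in
lemma not_hasPosJacobi_Ioi {C : ℝ} (hC : 0 < C) (hlt : C < Real.sqrt 2)
    (hr2 : Real.sqrt 2 ^ 2 = 2) (hrpos : 0 < Real.sqrt 2) :
    ¬ HasPosJacobi (Set.Ioi C) := by
  rintro ⟨g, hg⟩
  set r := Real.sqrt 2 with hrdef
  have hconst := Wr_const (convex_Ioi C)
    (fun x hx => ⟨(hg x hx).1, (hg x hx).2.1, (hg x hx).2.2.1⟩)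
  have hrmem : r ∈ Ioi C := hlt
  have hc0 : 0 < Wr g r := by
    have hgpos := (hg _ hrmem).2.2.2
    unfold Wr
    have h0 : r ^ 2 - 2 = 0 := by rw [hr2]; ring
    rw [h0]
    have he := Real.exp_pos (-r^2/4)
    nlinarith [mul_pos he (mul_pos (by positivity : (0:ℝ) < 2*r) hgpos)]
  obtain ⟨c, hcdef⟩ : ∃ c : ℝ, Wr g r = c := ⟨_, rfl⟩
  rw [hcdef] at hc0
  have hc : 0 < c := hc0
  -- the Wronskian identity on (C, ∞)
  have hid : ∀ x ∈ Ioi C, 2*x * g x - (x^2-2) * deriv g x = c * Real.exp (x^2/4) := by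
    intro x hx
    have hW : Real.exp (-(x^2)/4) * (2*x * g x - (x^2-2) * deriv g x) = c :=
      (hconst x hx r hrmem).trans hcdef
    have h1 : Real.exp (x^2/4) * Real.exp (-(x^2)/4) = 1 := by
      rw [← Real.exp_add]
      norm_num [neg_div]
    calc 2*x * g x - (x^2-2) * deriv g x
        = (Real.exp (x^2/4) * Real.exp (-(x^2)/4)) * (2*x * g x - (x^2-2) * deriv g x) := by
          rw [h1]; ring
      _ = Real.exp (x^2/4) * (Real.exp (-(x^2)/4) * (2*x * g x - (x^2-2) * deriv g x)) := by ring
      _ = Real.exp (x^2/4) * c := by rw [hW]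
      _ = c * Real.exp (x^2/4) := by ring
  have upos : ∀ x : ℝ, r < x → 0 < x^2 - 2 := by
    intro x hx; nlinarith
  -- the ratio g / (x² − 2) is antitone on (√2, ∞)
  have hders : ∀ x ∈ Ioi r, HasDerivAt (fun y => g y / (y^2-2))
      (-(c * Real.exp (x^2/4)) / (x^2-2)^2) x := by
    intro x hx
    have hxr : r < x := hx
    have hxC : x ∈ Ioi C := lt_trans hlt hxr
    have hu := upos x hxr
    have hd := ((hg x hxC).1.hasDerivAt.div (quad_hasDeriv x) (ne_of_gt hu))
    refine hd.congr_deriv ?_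
    have h2 := hid x hxC
    have h3 : -(c * Real.exp (x^2/4)) = deriv g x * (x^2-2) - g x * (2*x) := by linarith
    rw [h3]
  have hanti : AntitoneOn (fun y => g y / (y^2-2)) (Ioi r) := by
    apply antitoneOn_of_deriv_nonpos (convex_Ioi r)
    · intro x hx
      exact ((hders x hx).continuousAt).continuousWithinAt
    · rw [interior_Ioi]
      exact fun x hx => ((hders x hx).differentiableAt).differentiableWithinAt
    · rw [interior_Ioi]
      intro x hx
      rw [(hders x hx).deriv]
      have hu := upos x hx
      apply div_nonpos_of_nonpos_of_nonneg
      · nlinarith [Real.exp_pos (x^2/4)]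
      · positivity
  have har : r < r + 1 := by linarith
  have haC : r + 1 ∈ Ioi C := lt_trans hlt har
  have hua : 0 < (r+1)^2 - 2 := upos _ har
  obtain ⟨K, hKdef⟩ : ∃ K : ℝ, g (r+1) / ((r+1)^2 - 2) = K := ⟨_, rfl⟩
  have hKpos : 0 < K := hKdef ▸ div_pos (hg _ haC).2.2.2 hua
  have hbound : ∀ x : ℝ, r + 1 ≤ x → g x ≤ K * (x^2-2) := by
    intro x hx
    have hxr : r < x := lt_of_lt_of_le har hx
    have h1 : g x / (x^2-2) ≤ K := hKdef ▸ hanti har hxr hx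
    exact (div_le_iff₀ (upos x hxr)).1 h1
  -- choose b with c·exp(b²/4) dominating the needed polynomial
  obtain ⟨b, hab, hb1, hbig⟩ : ∃ b : ℝ, r + 1 ≤ b ∧ 1 ≤ b ∧
      (32*K+4) * b^4 ≤ c * Real.exp (b^2/4) := by
    have hq : Tendsto (fun b : ℝ => b^2/4) atTop atTop :=
      (tendsto_pow_atTop (by norm_num : 2 ≠ 0)).atTop_div_const (by norm_num)
    have htend : Tendsto (fun b : ℝ => Real.exp (b^2/4) / (b^2/4)^2) atTop atTop :=
      (Real.tendsto_exp_div_pow_atTop 2).comp hq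
    have hev : ∀ᶠ b : ℝ in atTop, 16*(32*K+4)/c ≤ Real.exp (b^2/4) / (b^2/4)^2 :=
      htend.eventually_ge_atTop _
    obtain ⟨b, h1, h2, h3⟩ :=
      (hev.and ((eventually_ge_atTop (r+1)).and (eventually_ge_atTop 1))).exists
    refine ⟨b, h2, h3, ?_⟩
    have hb0 : (0:ℝ) < b := lt_of_lt_of_le one_pos h3
    have h5 : (0:ℝ) < (b^2/4)^2 := by positivity
    rw [le_div_iff₀ h5] at h1
    have h6 : 16*(32*K+4)/c * (b^2/4)^2 = (32*K+4) * b^4 / c := by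
      field_simp
      ring
    rw [h6] at h1
    have := (div_le_iff₀ hc).1 h1
    linarith
  have hb0 : (0:ℝ) < b := lt_of_lt_of_le one_pos hb1
  have hub : 0 < (b+1)^2 - 2 := by nlinarith
  obtain ⟨M, hMdef⟩ : ∃ M : ℝ, K * ((b+1)^2 - 2) + 1 = M := ⟨_, rfl⟩
  have hMpos : 0 < M := by nlinarith [mul_pos hKpos hub]
  -- key polynomial estimate
  have hkey : ((b+1)^2-2) * (2*K*(b+1) + M) ≤ (32*K+4) * b^4 := by
    have hA : (b+1)^2 - 2 ≤ 4*b^2 := by nlinarith [sq_nonneg (b-1), sq_nonneg b]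
    have hB : 2*K*(b+1) + M ≤ (8*K+1)*b^2 := by
      rw [← hMdef]
      nlinarith [hKpos, hb1, mul_nonneg hKpos.le (sq_nonneg (b-1)),
        mul_nonneg hKpos.le (mul_nonneg (by linarith : (0:ℝ) ≤ b-1) (by linarith : (0:ℝ) ≤ b)),
        sq_nonneg (b-1)]
    have hpos1 : (0:ℝ) ≤ 2*K*(b+1) + M := by nlinarith [mul_pos hKpos hb0]
    calc ((b+1)^2-2) * (2*K*(b+1) + M) ≤ (4*b^2) * ((8*K+1)*b^2) :=
          mul_le_mul hA hB hpos1 (by positivity)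
      _ = (32*K+4) * b^4 := by ring
  -- deriv g ≤ −M on [b, b+1]
  have hg'le : ∀ x ∈ Icc b (b+1), deriv g x ≤ -M := by
    rintro x ⟨hx1, hx2⟩
    have hxr : r < x := by linarith
    have hxC : x ∈ Ioi C := lt_trans hlt hxr
    have hu := upos x hxr
    have hgb : g x ≤ K * (x^2-2) := hbound x (by linarith)
    have hidx := hid x hxC
    have hx0 : (0:ℝ) < x := by linarith
    have hxx : x^2 - 2 ≤ (b+1)^2 - 2 := by
      nlinarith [mul_nonneg (by linarith : (0:ℝ) ≤ b+1-x) (by linarith : (0:ℝ) ≤ b+1+x)]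
    have hexp : Real.exp (b^2/4) ≤ Real.exp (x^2/4) := by
      apply Real.exp_le_exp.2
      nlinarith [mul_nonneg (by linarith : (0:ℝ) ≤ x-b) (by linarith : (0:ℝ) ≤ x+b)]
    have h1 : 2*x*g x ≤ 2*K*(b+1)*((b+1)^2-2) := by
      have hxa := mul_le_mul_of_nonneg_left hgb (by positivity : (0:ℝ) ≤ 2*x)
      have hxb := mul_le_mul (by linarith : 2*x ≤ 2*(b+1))
        (mul_le_mul_of_nonneg_left hxx hKpos.le)
        (mul_nonneg hKpos.le hu.le) (by linarith : (0:ℝ) ≤ 2*(b+1))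
      nlinarith [hxa, hxb]
    have h2 : ((b+1)^2-2) * (2*K*(b+1)+M) ≤ c * Real.exp (x^2/4) := by
      calc ((b+1)^2-2) * (2*K*(b+1)+M) ≤ (32*K+4) * b^4 := hkey
        _ ≤ c * Real.exp (b^2/4) := hbig
        _ ≤ c * Real.exp (x^2/4) := mul_le_mul_of_nonneg_left hexp hc.le
    have hstep : (x^2-2) * deriv g x ≤ (x^2-2) * (-M) := by
      have e : (x^2-2) * deriv g x = 2*x*g x - c * Real.exp (x^2/4) := by linarith
      rw [e]
      have h3 := mul_le_mul_of_nonneg_left hxx hMpos.le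
      nlinarith [h1, h2, h3]
    exact le_of_mul_le_mul_left hstep hu
  -- hence g becomes negative on [b, b+1], contradiction
  have hIC : ∀ x ∈ Icc b (b+1), x ∈ Ioi C := by
    rintro x ⟨hx1, hx2⟩
    have : r < x := by linarith
    exact lt_trans hlt this
  have hphi : AntitoneOn (fun x => g x + M*x) (Icc b (b+1)) := by
    apply antitoneOn_of_deriv_nonpos (convex_Icc b (b+1))
    · intro x hx
      exact (((hg x (hIC x hx)).1.add
        ((differentiable_id.const_mul M) x)).continuousAt).continuousWithinAt
    · rw [interior_Icc]
      intro x hx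
      have hx' := hIC x (Ioo_subset_Icc_self hx)
      exact ((hg x hx').1.add ((differentiable_id.const_mul M) x)).differentiableWithinAt
    · rw [interior_Icc]
      intro x hx
      have hx' := hIC x (Ioo_subset_Icc_self hx)
      have hd : HasDerivAt (fun y => g y + M*y) (deriv g x + M) x := by
        have := (hg x hx').1.hasDerivAt.add ((hasDerivAt_id x).const_mul M)
        exact this.congr_deriv (by ring)
      rw [hd.deriv]
      have := hg'le x (Ioo_subset_Icc_self hx)
      linarith
  have hfin := hphi (left_mem_Icc.2 (by linarith)) (right_mem_Icc.2 (by linarith))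
    (by linarith : b ≤ b + 1)
  simp only at hfin
  have hgbK : g b ≤ K * (b^2-2) := hbound b hab
  have hKmono : K * (b^2-2) ≤ K * ((b+1)^2-2) :=
    mul_le_mul_of_nonneg_left (by nlinarith) hKpos.le
  have hgb1pos : 0 < g (b+1) :=
    (hg (b+1) (hIC (b+1) (right_mem_Icc.2 (by linarith)))).2.2.2
  nlinarith [hfin, hgbK, hKmono, hgb1pos, hMdef]

/-- `C = √2` is the unique positive real such that each of `(−∞,−C)`, `(−C,C)`, `(C,∞)`
admits a strictly positive solution of `g'' − (x/2)g' + g = 0`. -/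
theorem stmt6 :
    ∀ C : ℝ, 0 < C →
      ((HasPosJacobi (Set.Iio (-C)) ∧ HasPosJacobi (Set.Ioo (-C) C) ∧
          HasPosJacobi (Set.Ioi C)) ↔ C = Real.sqrt 2) := by
  have hr2 : Real.sqrt 2 ^ 2 = 2 := Real.sq_sqrt (by norm_num)
  have hrpos : 0 < Real.sqrt 2 := Real.sqrt_pos.2 (by norm_num)
  intro C hC
  constructor
  · -- uniqueness
    rintro ⟨-, hmid, hright⟩
    by_contra hne
    rcases lt_or_gt_of_ne hne with hlt | hgt
    · -- C < √2 : the region (C, ∞) is too large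
      exact absurd hright (not_hasPosJacobi_Ioi hC hlt hr2 hrpos)
    · -- C > √2 : the middle region is too large
      obtain ⟨g, hg⟩ := hmid
      have hconst := Wr_const (convex_Ioo (-C) C)
        (fun x hx => ⟨(hg x hx).1, (hg x hx).2.1, (hg x hx).2.2.1⟩)
      have mem1 : Real.sqrt 2 ∈ Ioo (-C) C := ⟨by linarith, hgt⟩
      have mem2 : -Real.sqrt 2 ∈ Ioo (-C) C := ⟨by linarith, by linarith⟩
      have e1 : 0 < Wr g (Real.sqrt 2) := by
        have hgpos := (hg _ mem1).2.2.2
        unfold Wr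
        rw [hr2]
        have he := Real.exp_pos (-(2:ℝ)/4)
        nlinarith [mul_pos he (mul_pos (by positivity : (0:ℝ) < 2*Real.sqrt 2) hgpos)]
      have e2 : Wr g (-Real.sqrt 2) < 0 := by
        have hgpos := (hg _ mem2).2.2.2
        unfold Wr
        rw [neg_sq]
        have he := Real.exp_pos (-Real.sqrt 2^2/4)
        have h0 : Real.sqrt 2 ^ 2 - 2 = 0 := by rw [hr2]; ring
        rw [h0]
        nlinarith [mul_pos he (mul_pos (by positivity : (0:ℝ) < 2*Real.sqrt 2) hgpos)]
      have := hconst _ mem1 _ mem2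
      linarith
  · rintro rfl
    refine ⟨⟨fun y => y^2 - 2, fun x hx => ?_⟩, ⟨fun y => 2 - y^2, fun x hx => ?_⟩,
      ⟨fun y => y^2 - 2, fun x hx => ?_⟩⟩
    · obtain ⟨h1, h2, h3⟩ := quad_jacobi x
      refine ⟨h1, h2, h3, ?_⟩
      simp only [mem_Iio] at hx
      show (0:ℝ) < x^2 - 2
      nlinarith [hr2, hrpos]
    · obtain ⟨h1, h2, h3⟩ := quad2_jacobi x
      refine ⟨h1, h2, h3, ?_⟩
      obtain ⟨hx1, hx2⟩ := hx
      show (0:ℝ) < 2 - x^2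
      nlinarith [hr2, hrpos]
    · obtain ⟨h1, h2, h3⟩ := quad_jacobi x
      refine ⟨h1, h2, h3, ?_⟩
      simp only [mem_Ioi] at hx
      show (0:ℝ) < x^2 - 2
      nlinarith [hr2, hrpos]
end

section
/- Let λ ≥ 2 be an integer and let C be a real number with 0 ≤ C < √(2λ). There is no twice differentiable function f : (C, ∞) → ℝ such that f''(r) + ((λ − 1)/r − r/2)·f'(r) + f(r) = 0 for all r ∈ (C, ∞) and f(r) > 0 for all r ∈ (C, ∞). -/
open Set Filter Real

set_option maxHeartbeats 2000000 in
/-- For `λ ≥ 2` and `0 ≤ C < √(2λ)` there is no twice differentiable `f` on `(C,∞)` with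
`f'' + ((λ−1)/r − r/2)f' + f = 0` and `f > 0` on `(C, ∞)`. -/
theorem stmt7 (l : ℕ) (hl : 2 ≤ l) (C : ℝ) (hC0 : 0 ≤ C)
    (hC : C < Real.sqrt (2*(l : ℝ))) :
    ¬ ∃ f : ℝ → ℝ,
      (∀ r ∈ Set.Ioi C, DifferentiableAt ℝ f r) ∧
      (∀ r ∈ Set.Ioi C, DifferentiableAt ℝ (deriv f) r) ∧
      (∀ r ∈ Set.Ioi C,
        deriv (deriv f) r + (((l : ℝ) - 1)/r - r/2) * deriv f r + f r = 0) ∧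
      (∀ r ∈ Set.Ioi C, 0 < f r) := by
  rintro ⟨f, hf1, hf2, hode, hpos⟩
  obtain ⟨k, rfl⟩ : ∃ k, l = k + 2 := ⟨l - 2, by omega⟩
  have hcast : (2 : ℝ) * ((k + 2 : ℕ) : ℝ) = 2 * (k : ℝ) + 4 := by push_cast; ring
  set r₀ : ℝ := Real.sqrt (2 * (k : ℝ) + 4) with hr₀def
  have h2L : (0:ℝ) < 2 * (k : ℝ) + 4 := by positivity
  have hr₀sq : r₀ ^ 2 = 2 * (k : ℝ) + 4 := Real.sq_sqrt h2L.le
  have hr₀pos : 0 < r₀ := Real.sqrt_pos.mpr h2L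
  have hr₀C : C < r₀ := by rw [hr₀def, ← hcast]; exact hC
  -- second derivative from the ODE
  have hode' : ∀ r ∈ Set.Ioi C,
      deriv (deriv f) r = -(((k:ℝ)+1)/r - r/2) * deriv f r - f r := by
    intro r hr
    have h := hode r hr
    have : ((k + 2 : ℕ) : ℝ) - 1 = (k:ℝ) + 1 := by push_cast; ring
    rw [this] at h
    linarith
  -- the weighted Wronskian
  set p : ℝ → ℝ := fun r => r ^ (k + 1) * Real.exp (-(r ^ 2 / 4)) with hpdef
  set F : ℝ → ℝ := fun r =>
    p r * (f r * (-(2 * r)) - (2*(k:ℝ)+4 - r ^ 2) * deriv f r) with hFdef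
  have hppos : ∀ r : ℝ, 0 < r → 0 < p r := by
    intro r hr; rw [hpdef]; positivity
  -- F has derivative 0 on (C, ∞)
  have hF0 : ∀ r ∈ Set.Ioi C, HasDerivAt F 0 r := by
    intro r hr
    have hr0 : (0:ℝ) < r := lt_of_le_of_lt hC0 hr
    have hfr : HasDerivAt f (deriv f r) r := (hf1 r hr).hasDerivAt
    have hfr' : HasDerivAt (deriv f) (deriv (deriv f) r) r := (hf2 r hr).hasDerivAt
    have hinner : HasDerivAt (fun r : ℝ => -(r ^ 2 / 4)) (-(r/2)) r := by
      have h := ((hasDerivAt_pow 2 r).div_const 4).neg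
      refine h.congr_deriv ?_
      simp; ring
    have hexp := hinner.exp
    have hpow : HasDerivAt (fun r : ℝ => r ^ (k+1)) (((k:ℝ)+1) * r ^ k) r := by
      simpa using hasDerivAt_pow (k+1) r
    have hp' : HasDerivAt p (((k:ℝ)+1) * r ^ k * Real.exp (-(r^2/4))
        + r^(k+1) * (Real.exp (-(r^2/4)) * (-(r/2)))) r := hpow.mul hexp
    have hlin : HasDerivAt (fun r : ℝ => -(2*r)) (-2) r := by
      have := ((hasDerivAt_id r).const_mul (2:ℝ)).neg
      refine this.congr_deriv ?_; ring
    have hm : HasDerivAt (fun r : ℝ => f r * (-(2*r)))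
        (deriv f r * (-(2*r)) + f r * (-2)) r := hfr.mul hlin
    have hg : HasDerivAt (fun r : ℝ => 2*(k:ℝ)+4 - r^2) (-(2*r)) r := by
      have h := (hasDerivAt_pow 2 r).const_sub (2*(k:ℝ)+4)
      refine h.congr_deriv ?_
      simp
    have hW' : HasDerivAt (fun r => f r * (-(2 * r)) - (2*(k:ℝ)+4 - r ^ 2) * deriv f r)
        ((deriv f r * (-(2*r)) + f r * (-2))
          - ((-(2*r)) * deriv f r + (2*(k:ℝ)+4 - r^2) * deriv (deriv f) r)) r :=
      hm.sub (hg.mul hfr')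
    have hF' := hp'.mul hW'
    rw [hFdef]
    refine hF'.congr_deriv ?_
    rw [hode' r hr]
    have hrne : r ≠ 0 := hr0.ne'
    field_simp
    ring
  -- F is constant equal to F r₀ on [r₀, ∞)
  have hFconst : ∀ r : ℝ, r₀ < r → F r = F r₀ := by
    intro r hrr
    have hsub : Set.Icc r₀ r ⊆ Set.Ioi C := fun x hx =>
      lt_of_lt_of_le hr₀C hx.1
    have hcont : ContinuousOn F (Set.Icc r₀ r) := fun x hx =>
      ((hF0 x (hsub hx)).continuousAt).continuousWithinAt
    obtain ⟨x, hx, hslope⟩ := exists_hasDerivAt_eq_slope F (fun _ => 0) hrr hcont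
      (fun x hx => hF0 x (hsub ⟨hx.1.le, hx.2.le⟩))
    have : F r - F r₀ = 0 := by
      have hne : r - r₀ ≠ 0 := sub_ne_zero.mpr hrr.ne'
      field_simp at hslope
      linarith [hslope]
    linarith
  -- the constant is negative
  have hr₀Ioi : r₀ ∈ Set.Ioi C := hr₀C
  have hc : F r₀ = p r₀ * (f r₀ * (-(2 * r₀))) := by
    show p r₀ * (f r₀ * (-(2 * r₀)) - (2*(k:ℝ)+4 - r₀ ^ 2) * deriv f r₀) = _
    rw [hr₀sq]
    ring
  have hcneg : F r₀ < 0 := by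
    rw [hc]
    have h1 := hppos r₀ hr₀pos
    have h2 := hpos r₀ hr₀Ioi
    nlinarith [mul_pos (mul_pos h1 h2) hr₀pos]
  -- φ = f / (r² − 2λ) on (r₀, ∞), with derivative F r₀ / (p r * (r²−2λ)²)
  set φ : ℝ → ℝ := fun r => f r / (r ^ 2 - (2*(k:ℝ)+4)) with hφdef
  have hden : ∀ r : ℝ, r₀ < r → 0 < r ^ 2 - (2*(k:ℝ)+4) := by
    intro r hrr
    have : r₀ ^ 2 < r ^ 2 := by nlinarith
    nlinarith [hr₀sq]
  have hφ' : ∀ r : ℝ, r₀ < r →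
      HasDerivAt φ (F r₀ / (p r * (r ^ 2 - (2*(k:ℝ)+4)) ^ 2)) r := by
    intro r hrr
    have hrC : r ∈ Set.Ioi C := lt_trans hr₀C hrr
    have hr0 : (0:ℝ) < r := lt_trans hr₀pos hrr
    have hfr : HasDerivAt f (deriv f r) r := (hf1 r hrC).hasDerivAt
    have hgd : HasDerivAt (fun r : ℝ => r ^ 2 - (2*(k:ℝ)+4)) (2*r) r := by
      have h := (hasDerivAt_pow 2 r).sub_const (2*(k:ℝ)+4)
      refine h.congr_deriv ?_
      simp
    have hdne : r ^ 2 - (2*(k:ℝ)+4) ≠ 0 := (hden r hrr).ne'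
    have hdiv := hfr.div hgd hdne
    rw [hφdef]
    refine hdiv.congr_deriv ?_
    -- show F r₀ / (p r * D^2) = (f' D - f 2r)/D^2  where p r (f'D - 2r f) ... 
    have hFr : F r = F r₀ := hFconst r hrr
    have hpne : p r ≠ 0 := (hppos r hr0).ne'
    rw [← hFr, hFdef]
    field_simp
    ring
  -- eventually p r * (r²−2λ)² ≤ 1
  have hev : ∀ᶠ r in atTop, p r * (r ^ 2 - (2*(k:ℝ)+4)) ^ 2 ≤ 1 := by
    have htt := tendsto_pow_mul_exp_neg_atTop_nhds_zero (k + 5)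
    have h1 : ∀ᶠ x : ℝ in atTop, x ^ (k+5) * Real.exp (-x) ≤ 1 :=
      (htt.eventually (eventually_le_nhds (by norm_num : (0:ℝ) < 1)))
    filter_upwards [h1, eventually_ge_atTop (4:ℝ),
      eventually_ge_atTop (Real.sqrt (2*(k:ℝ)+4))] with x hx1 hx4 hxr
    have hx0 : (0:ℝ) < x := by linarith
    have hxsq : 2*(k:ℝ)+4 ≤ x ^ 2 := by
      calc 2*(k:ℝ)+4 = r₀ ^ 2 := hr₀sq.symm
        _ ≤ x ^ 2 := by nlinarith [hr₀pos]
    have hexple : Real.exp (-(x ^ 2 / 4)) ≤ Real.exp (-x) := by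
      apply Real.exp_le_exp.mpr
      nlinarith
    have hsq : (x ^ 2 - (2*(k:ℝ)+4)) ^ 2 ≤ x ^ 4 := by nlinarith
    calc p x * (x ^ 2 - (2*(k:ℝ)+4)) ^ 2
        = x ^ (k+1) * (x ^ 2 - (2*(k:ℝ)+4)) ^ 2 * Real.exp (-(x ^ 2 / 4)) := by
          rw [hpdef]; ring
      _ ≤ x ^ (k+1) * x ^ 4 * Real.exp (-x) := by
          apply mul_le_mul
          · apply mul_le_mul_of_nonneg_left hsq (by positivity)
          · exact hexple
          · positivity
          · positivity
      _ = x ^ (k+5) * Real.exp (-x) := by rw [← pow_add]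
      _ ≤ 1 := hx1
  obtain ⟨R₁, hR₁⟩ := eventually_atTop.mp hev
  -- choose the starting point s and endpoint b
  set s : ℝ := max R₁ (r₀ + 1) with hsdef
  have hsr₀ : r₀ < s := lt_of_lt_of_le (by linarith) (le_max_right _ _)
  have hsR₁ : R₁ ≤ s := le_max_left _ _
  have hφs : 0 < φ s := by
    rw [hφdef]
    exact div_pos (hpos s (lt_trans hr₀C hsr₀)) (hden s hsr₀)
  set b : ℝ := s + (φ s + 1) / (-(F r₀)) with hbdef
  have hposc : 0 < -(F r₀) := by linarith
  have hsb : s < b := by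
    rw [hbdef]
    have : 0 < (φ s + 1) / (-(F r₀)) := div_pos (by linarith) hposc
    linarith
  -- derivative bound on (s, b)
  have hbound : ∀ x ∈ Set.Ioo s b, F r₀ / (p x * (x ^ 2 - (2*(k:ℝ)+4)) ^ 2) ≤ F r₀ := by
    intro x hx
    have hxr₀ : r₀ < x := lt_trans hsr₀ hx.1
    have hx0 : (0:ℝ) < x := lt_trans hr₀pos hxr₀
    have hq : 0 < p x * (x ^ 2 - (2*(k:ℝ)+4)) ^ 2 :=
      mul_pos (hppos x hx0) (pow_pos (hden x hxr₀) 2)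
    have hq1 : p x * (x ^ 2 - (2*(k:ℝ)+4)) ^ 2 ≤ 1 :=
      hR₁ x (le_trans hsR₁ hx.1.le)
    rw [div_le_iff₀ hq]
    have := mul_le_mul_of_nonpos_left hq1 hcneg.le
    linarith
  -- mean value theorem on [s, b]
  have hsubC : Set.Icc s b ⊆ Set.Ioi C := fun x hx =>
    lt_trans hr₀C (lt_of_lt_of_le hsr₀ hx.1)
  have hcont : ContinuousOn φ (Set.Icc s b) := by
    intro x hx
    have hxr₀ : r₀ < x := lt_of_lt_of_le hsr₀ hx.1
    exact ((hφ' x hxr₀).continuousAt).continuousWithinAt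
  obtain ⟨x, hxmem, hxslope⟩ := exists_hasDerivAt_eq_slope φ
    (fun x => F r₀ / (p x * (x ^ 2 - (2*(k:ℝ)+4)) ^ 2)) hsb hcont
    (fun x hx => hφ' x (lt_trans hsr₀ hx.1))
  have hb1 : φ b - φ s ≤ F r₀ * (b - s) := by
    have h1 := hbound x hxmem
    rw [hxslope] at h1
    have hbs : 0 < b - s := by linarith
    calc φ b - φ s = (φ b - φ s) / (b - s) * (b - s) := by field_simp
      _ ≤ F r₀ * (b - s) := mul_le_mul_of_nonneg_right h1 hbs.le
  have hFne : F r₀ ≠ 0 := ne_of_lt hcneg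
  have hbval : F r₀ * (b - s) = -(φ s + 1) := by
    rw [hbdef]
    field_simp
    ring
  have hφb : φ b ≤ -1 := by
    rw [hbval] at hb1
    linarith
  have hφbpos : 0 < φ b := by
    rw [hφdef]
    exact div_pos (hpos b (lt_trans hr₀C (lt_trans hsr₀ hsb)))
      (hden b (lt_trans hsr₀ hsb))
  linarith
end

section
/- lim_{x → √2⁻} (x² − 2)·∫₀ˣ e^{z²/4}/(z² − 2)² dz = −(1/2)·√(e/2). -/
noncomputable def Gaux (z : ℝ) : ℝ := -Real.exp (z^2/4) / (2*z*(z^2-2))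

lemma hasDerivAt_Gaux {z : ℝ} (hz : z ≠ 0) (hz2 : z^2 - 2 ≠ 0) :
    HasDerivAt Gaux (Real.exp (z^2/4)/(z^2-2)^2 - Real.exp (z^2/4)/(4*z^2)) z := by
  have h1 : HasDerivAt (fun z : ℝ => z^2/4) (z/2) z := by
    have := (hasDerivAt_pow 2 z).div_const 4
    refine this.congr_deriv ?_
    push_cast
    ring
  have h2 : HasDerivAt (fun z : ℝ => Real.exp (z^2/4)) (Real.exp (z^2/4) * (z/2)) z :=
    (Real.hasDerivAt_exp _).comp z h1
  have h3 : HasDerivAt (fun z : ℝ => -Real.exp (z^2/4)) (-(Real.exp (z^2/4) * (z/2))) z := h2.neg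
  have hD : HasDerivAt (fun z : ℝ => 2*z*(z^2-2)) (2*(z^2-2) + 2*z*(2*z)) z := by
    have := ((hasDerivAt_id z).const_mul 2).mul ((hasDerivAt_pow 2 z).sub_const 2)
    refine this.congr_deriv ?_
    simp
  have hDne : 2*z*(z^2-2) ≠ 0 := by
    intro h
    rcases mul_eq_zero.mp h with h | h
    · rcases mul_eq_zero.mp h with h | h
      · norm_num at h
      · exact hz h
    · exact hz2 h
  have := h3.div hD hDne
  refine this.congr_deriv ?_
  field_simp
  ring

/-- `lim_{x → √2⁻} (x² − 2)·∫₀ˣ e^{z²/4}/(z² − 2)² dz = −(1/2)·√(e/2)`. -/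
theorem stmt9 :
    Filter.Tendsto
      (fun x : ℝ => (x^2 - 2) * ∫ z in (0:ℝ)..x, Real.exp (z^2/4) / (z^2 - 2)^2)
      (nhdsWithin (Real.sqrt 2) (Set.Iio (Real.sqrt 2)))
      (nhds (-(1/2) * Real.sqrt (Real.exp 1 / 2))) := by
  have hs2 : Real.sqrt 2 ^ 2 = 2 := Real.sq_sqrt (by norm_num)
  have hs2pos : 0 < Real.sqrt 2 := Real.sqrt_pos.mpr (by norm_num)
  have h1lt : (1:ℝ) < Real.sqrt 2 := by nlinarith
  have hlt2 : Real.sqrt 2 < 2 := by nlinarith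
  set f : ℝ → ℝ := fun z => Real.exp (z^2/4) / (z^2 - 2)^2 with hf
  set h : ℝ → ℝ := fun z => Real.exp (z^2/4) / (4*z^2) with hh
  set J : ℝ → ℝ := fun x => ∫ z in (0:ℝ)..x, f z with hJ
  set A : ℝ → ℝ := fun x => ∫ z in (1:ℝ)..x, h z with hA
  set C : ℝ := J 1 - Gaux 1 with hC
  -- integrability of f on subintervals of [0, √2)
  have hci : ∀ a b : ℝ, 0 ≤ a → a ≤ b → b < Real.sqrt 2 →
      IntervalIntegrable f MeasureTheory.volume a b := by
    intro a b ha hab hb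
    apply ContinuousOn.intervalIntegrable
    apply ContinuousOn.div (by fun_prop) (by fun_prop)
    intro z hz
    rw [Set.uIcc_of_le hab] at hz
    have hz2 : z^2 < 2 := by nlinarith [hz.1, hz.2]
    have : z^2 - 2 ≠ 0 := by linarith
    exact pow_ne_zero 2 this
  -- key identity on (1, √2)
  have key : ∀ x ∈ Set.Ioo (1:ℝ) (Real.sqrt 2),
      (x^2 - 2) * J x = -Real.exp (x^2/4)/(2*x) + (x^2-2) * (C + A x) := by
    intro x hx
    obtain ⟨hx1, hx2⟩ := hx
    have hx0 : x ≠ 0 := by linarith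
    have hxs : x^2 < 2 := by nlinarith
    have hxs' : x^2 - 2 ≠ 0 := by linarith
    have hint1x : IntervalIntegrable f MeasureTheory.volume 1 x :=
      hci 1 x (by norm_num) hx1.le hx2
    have hint01 : IntervalIntegrable f MeasureTheory.volume 0 1 :=
      hci 0 1 le_rfl (by norm_num) h1lt
    have hinth : IntervalIntegrable h MeasureTheory.volume 1 x := by
      apply ContinuousOn.intervalIntegrable
      apply ContinuousOn.div (by fun_prop) (by fun_prop)
      intro z hz
      rw [Set.uIcc_of_le hx1.le] at hz
      have : (1:ℝ) ≤ z := hz.1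
      positivity
    have hsplit : J x = J 1 + ∫ z in (1:ℝ)..x, f z := by
      simp only [hJ]
      rw [intervalIntegral.integral_add_adjacent_intervals hint01 hint1x]
    have hftc : (∫ z in (1:ℝ)..x, (f z - h z)) = Gaux x - Gaux 1 := by
      apply intervalIntegral.integral_eq_sub_of_hasDerivAt
      · intro z hz
        rw [Set.uIcc_of_le hx1.le] at hz
        have hz0 : z ≠ 0 := by linarith [hz.1]
        have hz2 : z^2 - 2 ≠ 0 := by nlinarith [hz.1, hz.2]
        exact hasDerivAt_Gaux hz0 hz2
      · exact hint1x.sub hinth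
    have hsub : (∫ z in (1:ℝ)..x, (f z - h z)) = (∫ z in (1:ℝ)..x, f z) - A x :=
      intervalIntegral.integral_sub hint1x hinth
    have hval : (∫ z in (1:ℝ)..x, f z) = Gaux x - Gaux 1 + A x := by
      rw [← hftc, hsub]; ring
    rw [hsplit, hval, hC]
    have hGx : (x^2-2) * Gaux x = -Real.exp (x^2/4)/(2*x) := by
      simp only [Gaux]
      field_simp
    nlinarith [hGx]
  -- limit of the first term
  have t1 : Filter.Tendsto (fun x : ℝ => -Real.exp (x^2/4)/(2*x))
      (nhdsWithin (Real.sqrt 2) (Set.Iio (Real.sqrt 2)))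
      (nhds (-Real.exp (1/2)/(2*Real.sqrt 2))) := by
    have hc : ContinuousAt (fun x : ℝ => -Real.exp (x^2/4)/(2*x)) (Real.sqrt 2) := by
      apply ContinuousAt.div (by fun_prop) (by fun_prop)
      positivity
    have := hc.tendsto.mono_left (nhdsWithin_le_nhds (s := Set.Iio (Real.sqrt 2)))
    rw [show Real.sqrt 2 ^ 2 / 4 = 1/2 by rw [hs2]; norm_num] at this
    exact this
  -- limit of the second term
  have t2 : Filter.Tendsto (fun x : ℝ => (x^2-2) * (C + A x))
      (nhdsWithin (Real.sqrt 2) (Set.Iio (Real.sqrt 2))) (nhds 0) := by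
    apply squeeze_zero_norm' (a := fun x : ℝ => |x^2-2| * (|C| + 1))
    · filter_upwards [Ioo_mem_nhdsLT_of_mem (Set.mem_Ioc.mpr ⟨h1lt, le_rfl⟩)] with x hx
      obtain ⟨hx1, hx2⟩ := hx
      have hAb : |A x| ≤ 1 := by
        have hb : ∀ z ∈ Set.uIoc (1:ℝ) x, ‖h z‖ ≤ 1 := by
          intro z hz
          rw [Set.uIoc_of_le hx1.le] at hz
          obtain ⟨hz1, hz2⟩ := hz
          have hz2' : z^2 < 2 := by nlinarith
          have he : Real.exp (z^2/4) ≤ 3 := by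
            calc Real.exp (z^2/4) ≤ Real.exp 1 := Real.exp_le_exp.mpr (by nlinarith)
            _ ≤ 3 := by linarith [Real.exp_one_lt_d9]
          simp only [hh, Real.norm_eq_abs]
          rw [abs_of_nonneg (by positivity), div_le_one (by positivity)]
          nlinarith
        have := intervalIntegral.norm_integral_le_of_norm_le_const hb
        rw [Real.norm_eq_abs] at this
        calc |A x| ≤ 1 * |x - 1| := this
        _ ≤ 1 := by rw [one_mul, abs_of_nonneg (by linarith)]; linarith
      calc ‖(x^2-2) * (C + A x)‖ = |x^2-2| * |C + A x| := by
            rw [Real.norm_eq_abs, abs_mul]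
      _ ≤ |x^2-2| * (|C| + 1) := by
            apply mul_le_mul_of_nonneg_left _ (abs_nonneg _)
            calc |C + A x| ≤ |C| + |A x| := abs_add_le _ _
            _ ≤ |C| + 1 := by linarith
    · have hc : ContinuousAt (fun x : ℝ => |x^2-2| * (|C| + 1)) (Real.sqrt 2) := by fun_prop
      have := hc.tendsto.mono_left (nhdsWithin_le_nhds (s := Set.Iio (Real.sqrt 2)))
      simpa [hs2] using this
  -- combine
  have tmain := t1.add t2
  rw [add_zero] at tmain
  have heqv : -Real.exp (1/2)/(2*Real.sqrt 2) = -(1/2) * Real.sqrt (Real.exp 1 / 2) := by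
    have h1 : Real.sqrt (Real.exp 1) = Real.exp (1/2) := by
      rw [show Real.exp 1 = Real.exp (1/2) * Real.exp (1/2) by
        rw [← Real.exp_add]; norm_num]
      exact Real.sqrt_mul_self (Real.exp_nonneg _)
    rw [Real.sqrt_div (Real.exp_nonneg 1), h1]
    ring
  rw [← heqv]
  apply tmain.congr'
  filter_upwards [Ioo_mem_nhdsLT_of_mem (Set.mem_Ioc.mpr ⟨h1lt, le_rfl⟩)] with x hx
  exact (key x hx).symm
end

section
/- Let λ ≥ 2 be an integer. Then lim_{r → √(2λ)⁻} (r² − 2λ)·∫₁ʳ e^{s²/4}/(s^{λ−1}·(s² − 2λ)²) ds = −(1/2)·(e/(2λ))^{λ/2}. -/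
open Real intervalIntegral Set Filter

lemma hphi (k : ℕ) (x : ℝ) (hx : 0 < x) :
    HasDerivAt (fun s : ℝ => Real.exp (s^2/4) / (2*s^(k+2)))
      (Real.exp (x^2/4) * (x^2 - 2*(k+2)) / (4*x^(k+3))) x := by
  have h1 : HasDerivAt (fun s : ℝ => Real.exp (s^2/4))
      (Real.exp (x^2/4) * ((2:ℕ)*x^1/4)) x := ((hasDerivAt_pow 2 x).div_const 4).exp
  have h2 : HasDerivAt (fun s : ℝ => 2*s^(k+2)) (2*((k+2:ℕ)*x^(k+1))) x :=
    (hasDerivAt_pow (k+2) x).const_mul 2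
  have := h1.div h2 (by positivity)
  refine this.congr_deriv ?_
  have hx' : x ≠ 0 := ne_of_gt hx
  field_simp
  push_cast
  ring

lemma hFder (c x : ℝ) (hx : x^2 - c ≠ 0) :
    HasDerivAt (fun s : ℝ => -(s^2 - c)⁻¹) (2*x/(x^2-c)^2) x := by
  have := (((hasDerivAt_pow 2 x).sub_const c).inv hx).neg
  refine this.congr_deriv ?_
  field_simp
  norm_num
  ring

/-- For `λ ≥ 2`,
`lim_{r → √(2λ)⁻} (r² − 2λ)·∫₁ʳ e^{s²/4}/(s^{λ−1}(s² − 2λ)²) ds = −(1/2)(e/(2λ))^{λ/2}`. -/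
theorem stmt11 (l : ℕ) (hl : 2 ≤ l) :
    Filter.Tendsto
      (fun r : ℝ => (r^2 - 2*(l : ℝ)) *
        ∫ s in (1:ℝ)..r, Real.exp (s^2/4) / (s^(l-1) * (s^2 - 2*(l : ℝ))^2))
      (nhdsWithin (Real.sqrt (2*(l : ℝ))) (Set.Iio (Real.sqrt (2*(l : ℝ)))))
      (nhds (-(1/2) * (Real.exp 1 / (2*(l : ℝ))) ^ ((l : ℝ)/2))) := by
  obtain ⟨k, rfl⟩ := Nat.exists_eq_add_of_le hl
  have hl1 : 2 + k - 1 = k + 1 := by omega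
  set c : ℝ := 2*((2 + k : ℕ) : ℝ) with hc_def
  have hc4 : (4:ℝ) ≤ c := by simp [hc_def]; linarith
  have hc0 : (0:ℝ) ≤ c := by linarith
  set a : ℝ := Real.sqrt c with ha_def
  have ha2 : a^2 = c := Real.sq_sqrt hc0
  have ha0 : 0 < a := Real.sqrt_pos.mpr (by linarith)
  have ha1 : 1 < a := by nlinarith [ha2]
  -- local notation
  set φ : ℝ → ℝ := fun s => Real.exp (s^2/4) / (2*s^(k+2)) with hφ_def
  set G : ℝ → ℝ := fun r => ∫ s in (1:ℝ)..r, Real.exp (s^2/4) / (4*s^(k+3)) with hG_def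
  -- key identity on Ioo 1 a
  have key : ∀ r ∈ Ioo (1:ℝ) a,
      (r^2 - c) * (∫ s in (1:ℝ)..r, Real.exp (s^2/4) / (s^(2+k-1) * (s^2 - c)^2))
      = -φ r - (r^2 - c) * (φ 1 * (-(1^2 - c)⁻¹)) + (r^2 - c) * G r := by
    intro r hr
    have hr1 : (1:ℝ) ≤ r := le_of_lt hr.1
    have huIcc : Set.uIcc (1:ℝ) r = Set.Icc 1 r := Set.uIcc_of_le hr1
    have hmem : ∀ s ∈ Set.uIcc (1:ℝ) r, 0 < s ∧ s^2 - c ≠ 0 := by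
      intro s hs
      rw [huIcc] at hs
      have h1 : (1:ℝ) ≤ s := hs.1
      have h2 : s ≤ r := hs.2
      have : s^2 < c := by nlinarith [hr.2, ha2]
      exact ⟨by linarith, by linarith⟩
    have hrne : r^2 - c ≠ 0 := by
      have : r^2 < c := by nlinarith [hr.2, ha2]
      linarith
    -- step A : rewrite integrand as φ * F'
    have stepA : (∫ s in (1:ℝ)..r, Real.exp (s^2/4) / (s^(2+k-1) * (s^2 - c)^2))
        = ∫ s in (1:ℝ)..r, φ s * (2*s/(s^2-c)^2) := by
      apply intervalIntegral.integral_congr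
      intro s hs
      obtain ⟨hs0, hsc⟩ := hmem s hs
      have hs0' : s ≠ 0 := ne_of_gt hs0
      rw [hl1]
      simp only [hφ_def]
      field_simp
      ring
    -- integrability of the two derivatives
    have hcontu' : ContinuousOn (fun x : ℝ => Real.exp (x^2/4) * (x^2 - 2*(k+2)) / (4*x^(k+3)))
        (Set.uIcc 1 r) := by
      apply ContinuousOn.div
      · fun_prop
      · fun_prop
      · intro x hx
        have := (hmem x hx).1
        positivity
    have hcontv' : ContinuousOn (fun x : ℝ => 2*x/(x^2-c)^2) (Set.uIcc 1 r) := by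
      apply ContinuousOn.div
      · fun_prop
      · fun_prop
      · intro x hx
        exact pow_ne_zero _ (hmem x hx).2
    -- step B : integration by parts
    have stepB : (∫ s in (1:ℝ)..r, φ s * (2*s/(s^2-c)^2))
        = φ r * (-(r^2 - c)⁻¹) - φ 1 * (-(1^2 - c)⁻¹)
          - ∫ s in (1:ℝ)..r, (Real.exp (s^2/4) * (s^2 - 2*(k+2)) / (4*s^(k+3))) * (-(s^2 - c)⁻¹) := by
      have := intervalIntegral.integral_mul_deriv_eq_deriv_mul
        (u := φ) (v := fun s : ℝ => -(s^2 - c)⁻¹)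
        (u' := fun x => Real.exp (x^2/4) * (x^2 - 2*(k+2)) / (4*x^(k+3)))
        (v' := fun x => 2*x/(x^2-c)^2)
        (fun x hx => hphi k x (hmem x hx).1)
        (fun x hx => hFder c x (hmem x hx).2)
        (hcontu'.intervalIntegrable)
        (hcontv'.intervalIntegrable)
      simpa using this
    -- step C : the remainder integral simplifies
    have stepC : (∫ s in (1:ℝ)..r, (Real.exp (s^2/4) * (s^2 - 2*(k+2)) / (4*s^(k+3))) * (-(s^2 - c)⁻¹))
        = - G r := by
      rw [hG_def]
      rw [← intervalIntegral.integral_neg]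
      apply intervalIntegral.integral_congr
      intro s hs
      obtain ⟨hs0, hsc⟩ := hmem s hs
      have hs0' : s ≠ 0 := ne_of_gt hs0
      have hcc : s^2 - 2*((k:ℝ)+2) ≠ 0 := by
        have : c = 2*((k:ℝ)+2) := by rw [hc_def]; push_cast; ring
        rw [← this]; exact hsc
      have hceq : c = 2*((k:ℝ)+2) := by rw [hc_def]; push_cast; ring
      rw [hceq]
      field_simp
    rw [stepA, stepB, stepC]
    field_simp
    ring
  -- rewrite the filter
  rw [← nhdsWithin_Ioo_eq_nhdsLT ha1]
  have hceq : ∀ r : ℝ, r^2 - 2*((2+k:ℕ):ℝ) = r^2 - c := fun r => rfl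
  -- limits of the pieces
  have hφcont : Filter.Tendsto φ (nhdsWithin a (Ioo 1 a)) (nhds (φ a)) := by
    apply Filter.Tendsto.mono_left _ nhdsWithin_le_nhds
    apply ContinuousAt.tendsto
    apply ContinuousAt.div
    · fun_prop
    · fun_prop
    · positivity
  have hzero : Filter.Tendsto (fun r : ℝ => r^2 - c) (nhdsWithin a (Ioo 1 a)) (nhds 0) := by
    have : Filter.Tendsto (fun r : ℝ => r^2 - c) (nhds a) (nhds (a^2 - c)) :=
      ((continuous_pow 2).sub continuous_const).tendsto a
    rw [ha2, sub_self] at this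
    exact this.mono_left nhdsWithin_le_nhds
  have hGcont : Filter.Tendsto G (nhdsWithin a (Ioo 1 a)) (nhds (G a)) := by
    have hint : MeasureTheory.IntegrableOn (fun s : ℝ => Real.exp (s^2/4) / (4*s^(k+3)))
        (Set.uIcc 1 a) := by
      apply ContinuousOn.integrableOn_uIcc
      apply ContinuousOn.div
      · fun_prop
      · fun_prop
      · intro x hx
        rw [Set.uIcc_of_le (le_of_lt ha1)] at hx
        have : (1:ℝ) ≤ x := hx.1
        positivity
    have := intervalIntegral.continuousOn_primitive_interval hint
    have h2 := (this a (by rw [Set.uIcc_of_le (le_of_lt ha1)]; exact ⟨le_of_lt ha1, le_refl a⟩))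
    refine h2.tendsto.mono_left (nhdsWithin_mono a ?_)
    rw [Set.uIcc_of_le (le_of_lt ha1)]
    exact Set.Ioo_subset_Icc_self
  have hlim : Filter.Tendsto
      (fun r : ℝ => -φ r - (r^2 - c) * (φ 1 * (-(1^2 - c)⁻¹)) + (r^2 - c) * G r)
      (nhdsWithin a (Ioo 1 a)) (nhds (-φ a - 0 * (φ 1 * (-(1^2 - c)⁻¹)) + 0 * G a)) :=
    (hφcont.neg.sub (hzero.mul tendsto_const_nhds)).add (hzero.mul hGcont)
  have heval : -φ a - 0 * (φ 1 * (-(1^2 - c)⁻¹)) + 0 * G a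
      = -(1/2) * (Real.exp 1 / (2*((2+k:ℕ):ℝ))) ^ (((2+k:ℕ):ℝ)/2) := by
    simp only [zero_mul, mul_zero, sub_zero, add_zero]
    rw [hφ_def]
    simp only
    rw [ha2]
    have h1 : Real.exp 1 / (2*((2+k:ℕ):ℝ)) = Real.exp 1 / c := rfl
    rw [h1]
    have hepos : (0:ℝ) ≤ Real.exp 1 := (Real.exp_pos 1).le
    rw [Real.div_rpow hepos hc0, Real.exp_one_rpow]
    have hak : a^(k+2) = c ^ (((2+k:ℕ):ℝ)/2) := by
      rw [ha_def, Real.sqrt_eq_rpow, ← Real.rpow_natCast (c ^ ((1:ℝ)/2)) (k+2),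
        ← Real.rpow_mul hc0]
      congr 1
      push_cast
      ring
    rw [hak]
    have hcpow : (0:ℝ) < c ^ (((2+k:ℕ):ℝ)/2) := Real.rpow_pos_of_pos (by linarith) _
    have hceq2 : c/4 = ((2+k:ℕ):ℝ)/2 := by rw [hc_def]; push_cast; ring
    rw [hceq2]
    field_simp
  rw [← heval]
  apply hlim.congr'
  filter_upwards [self_mem_nhdsWithin] with r hr
  rw [← key r hr]
end
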